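/- For every natural number n, the number of transfer systems on the chain {0 < 1 < ... < n} equals the (n+1)-st Catalan number Cat(n+1) = (2(n+1))! / ((n+2)! (n+1)!). -/

import Mathlib

/-- A transfer system on the chain `{0 < 1 < ... < n}`: a relation contained in
the order relation (and supported on the chain), reflexive, transitive, and
satisfying restriction. -/
def IsTransferSystem (n : ℕ) (R : ℕ → ℕ → Prop) : Prop :=
  (∀ a b, R a b → a ≤ b ∧ b ≤ n) ∧
  (∀ a, a ≤ n → R a a) ∧
  (∀ a b c, R a b → R b c → R a c) ∧
  (∀ k h m, R k h → m ≤ h → R (min k m) m)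

open BinaryTree

/-- Validity of `f` on the window `[a, a+m)`: each point goes weakly up, stays in the
window, and intervals are nested. -/
def TSValid (a m : ℕ) (f : ℕ → ℕ) : Prop :=
  ∀ i, a ≤ i → i < a + m → i ≤ f i ∧ f i < a + m ∧ ∀ j, i ≤ j → j ≤ f i → f j ≤ f i

def tsFromTree (a : ℕ) : BinaryTree Unit → ℕ → ℕ
  | nil => fun i => i
  | node _ l r => fun i =>
      if i = a then a + l.numNodes
      else if i ≤ a + l.numNodes then tsFromTree (a+1) l i
      else tsFromTree (a + l.numNodes + 1) r i

def tsToTree (f : ℕ → ℕ) : ℕ → ℕ → BinaryTree Unit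
  | 0, _ => nil
  | m+1, a => node () (tsToTree f (min (f a - a) m) (a+1)) (tsToTree f (m - (f a - a)) (f a + 1))
  termination_by m _ => m
  decreasing_by all_goals omega

lemma tsToTree_zero (f : ℕ → ℕ) (a : ℕ) : tsToTree f 0 a = nil := by
  rw [tsToTree]

lemma tsToTree_succ (f : ℕ → ℕ) (m a : ℕ) :
    tsToTree f (m+1) a = node () (tsToTree f (min (f a - a) m) (a+1))
      (tsToTree f (m - (f a - a)) (f a + 1)) := by
  rw [tsToTree]

lemma tsFromTree_nil (a i : ℕ) : tsFromTree a nil i = i := rfl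

lemma tsFromTree_node (a : ℕ) (v : Unit) (l r : BinaryTree Unit) (i : ℕ) :
    tsFromTree a (node v l r) i =
      if i = a then a + l.numNodes
      else if i ≤ a + l.numNodes then tsFromTree (a+1) l i
      else tsFromTree (a + l.numNodes + 1) r i := rfl

lemma numNodes_node (v : Unit) (l r : BinaryTree Unit) :
    (node v l r).numNodes = l.numNodes + r.numNodes + 1 := rfl

lemma tsFromTree_out : ∀ (t : BinaryTree Unit) (a i : ℕ), (i < a ∨ a + t.numNodes ≤ i) →
    tsFromTree a t i = i := by
  intro t
  induction t with
  | nil => intro a i _; rfl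
  | node v l r ihl ihr =>
    intro a i h
    rw [numNodes_node] at h
    have hia : i ≠ a := by omega
    rw [tsFromTree_node, if_neg hia]
    by_cases h2 : i ≤ a + l.numNodes
    · rw [if_pos h2]; exact ihl _ _ (by omega)
    · rw [if_neg h2]; exact ihr _ _ (by omega)

lemma tsFromTree_valid : ∀ (t : BinaryTree Unit) (a : ℕ), TSValid a t.numNodes (tsFromTree a t) := by
  intro t
  induction t with
  | nil =>
    intro a i h1 h2
    have h0 : (nil : BinaryTree Unit).numNodes = 0 := rfl
    omega
  | node v l r ihl ihr =>
    intro a i h1 h2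
    have hnn : (node v l r).numNodes = l.numNodes + r.numNodes + 1 := rfl
    by_cases hia : i = a
    · subst hia
      have hfa : tsFromTree i (node v l r) i = i + l.numNodes := by
        rw [tsFromTree_node, if_pos rfl]
      rw [hfa]
      refine ⟨by omega, by omega, ?_⟩
      intro j hj1 hj2
      by_cases hja : j = i
      · rw [hja, hfa]
      · have hja' : i < j := by omega
        rw [tsFromTree_node, if_neg hja, if_pos hj2]
        by_cases hnl : l.numNodes = 0
        · omega
        · have := (ihl (i+1) j (by omega) (by omega)).2.1
          omega
    · have hai : a < i := by omega
      by_cases hil : i ≤ a + l.numNodes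
      · rw [tsFromTree_node, if_neg hia, if_pos hil]
        obtain ⟨H1, H2, H3⟩ := ihl (a+1) i (by omega) (by omega)
        refine ⟨H1, by omega, ?_⟩
        intro j hj1 hj2
        have hja : j ≠ a := by omega
        have hjl : j ≤ a + l.numNodes := by omega
        rw [tsFromTree_node, if_neg hja, if_pos hjl]
        exact H3 j hj1 hj2
      · rw [tsFromTree_node, if_neg hia, if_neg hil]
        obtain ⟨H1, H2, H3⟩ := ihr (a + l.numNodes + 1) i (by omega) (by omega)
        refine ⟨H1, by omega, ?_⟩
        intro j hj1 hj2
        have hja : j ≠ a := by omega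
        have hjl : ¬ j ≤ a + l.numNodes := by omega
        rw [tsFromTree_node, if_neg hja, if_neg hjl]
        exact H3 j hj1 hj2

lemma TSValid.left {a m : ℕ} {f : ℕ → ℕ} (h : TSValid a (m+1) f) :
    TSValid (a+1) (f a - a) f := by
  obtain ⟨h1, h2, h3⟩ := h a le_rfl (by omega)
  intro i hi1 hi2
  obtain ⟨H1, H2, H3⟩ := h i (by omega) (by omega)
  refine ⟨H1, ?_, H3⟩
  have := h3 i (by omega) (by omega)
  omega

lemma TSValid.right {a m : ℕ} {f : ℕ → ℕ} (h : TSValid a (m+1) f) :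
    TSValid (f a + 1) (m - (f a - a)) f := by
  obtain ⟨h1, h2, h3⟩ := h a le_rfl (by omega)
  intro i hi1 hi2
  obtain ⟨H1, H2, H3⟩ := h i (by omega) (by omega)
  exact ⟨H1, by omega, H3⟩

lemma numNodes_tsToTree (m a : ℕ) (f : ℕ → ℕ) (h : TSValid a m f) :
    (tsToTree f m a).numNodes = m := by
  match m with
  | 0 => rw [tsToTree_zero]; rfl
  | m+1 =>
    obtain ⟨h1, h2, _⟩ := h a le_rfl (by omega)
    have hle : f a - a ≤ m := by omega
    rw [tsToTree_succ, min_eq_left hle, numNodes_node,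
      numNodes_tsToTree (f a - a) (a+1) f h.left,
      numNodes_tsToTree (m - (f a - a)) (f a + 1) f h.right]
    omega
termination_by m
decreasing_by all_goals omega

lemma tsToTree_congr (m a : ℕ) (f g : ℕ → ℕ) (hf : TSValid a m f)
    (heq : ∀ i, a ≤ i → i < a + m → f i = g i) :
    tsToTree f m a = tsToTree g m a := by
  match m with
  | 0 => rw [tsToTree_zero, tsToTree_zero]
  | m+1 =>
    obtain ⟨h1, h2, h3⟩ := hf a le_rfl (by omega)
    have hle : f a - a ≤ m := by omega
    have hga : g a = f a := (heq a le_rfl (by omega)).symm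
    rw [tsToTree_succ, tsToTree_succ, hga, min_eq_left hle,
      tsToTree_congr (f a - a) (a+1) f g hf.left
        (fun i hi1 hi2 => heq i (by omega) (by omega)),
      tsToTree_congr (m - (f a - a)) (f a + 1) f g hf.right
        (fun i hi1 hi2 => heq i (by omega) (by omega))]
termination_by m
decreasing_by all_goals omega

lemma tsToTree_fromTree : ∀ (t : BinaryTree Unit) (a : ℕ),
    tsToTree (tsFromTree a t) t.numNodes a = t := by
  intro t
  induction t with
  | nil => intro a; show tsToTree (tsFromTree a nil) 0 a = nil; rw [tsToTree_zero]
  | node v l r ihl ihr =>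
    intro a
    have hv : v = () := rfl
    set f := tsFromTree a (node v l r) with hf
    have hfa : f a = a + l.numNodes := by rw [hf, tsFromTree_node, if_pos rfl]
    rw [numNodes_node, tsToTree_succ]
    have e1 : min (f a - a) (l.numNodes + r.numNodes) = l.numNodes := by omega
    have e2 : (l.numNodes + r.numNodes) - (f a - a) = r.numNodes := by omega
    rw [e1, e2, hfa]
    have hL : tsToTree f l.numNodes (a+1) = l := by
      rw [← tsToTree_congr l.numNodes (a+1) (tsFromTree (a+1) l) f (tsFromTree_valid l (a+1))
        (by
          intro i hi1 hi2
          have hia : i ≠ a := by omega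
          have hil : i ≤ a + l.numNodes := by omega
          rw [hf, tsFromTree_node, if_neg hia, if_pos hil])]
      exact ihl (a+1)
    have hR : tsToTree f r.numNodes (a + l.numNodes + 1) = r := by
      rw [← tsToTree_congr r.numNodes (a + l.numNodes + 1) (tsFromTree (a + l.numNodes + 1) r) f
        (tsFromTree_valid r (a + l.numNodes + 1))
        (by
          intro i hi1 hi2
          have hia : i ≠ a := by omega
          have hil : ¬ i ≤ a + l.numNodes := by omega
          rw [hf, tsFromTree_node, if_neg hia, if_neg hil])]
      exact ihr (a + l.numNodes + 1)
    rw [hL, hR, hv]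

lemma tsFromTree_toTree (m a : ℕ) (f : ℕ → ℕ) (h : TSValid a m f) :
    ∀ i, a ≤ i → i < a + m → tsFromTree a (tsToTree f m a) i = f i := by
  match m with
  | 0 => intro i hi1 hi2; omega
  | m+1 =>
    intro i hi1 hi2
    obtain ⟨h1, h2, h3⟩ := h a le_rfl (by omega)
    have hle : f a - a ≤ m := by omega
    have hnL : (tsToTree f (f a - a) (a+1)).numNodes = f a - a :=
      numNodes_tsToTree _ _ _ h.left
    rw [tsToTree_succ, min_eq_left hle, tsFromTree_node, hnL]
    by_cases hia : i = a
    · subst hia; rw [if_pos rfl]; omega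
    · rw [if_neg hia]
      by_cases hil : i ≤ a + (f a - a)
      · rw [if_pos hil]
        exact tsFromTree_toTree (f a - a) (a+1) f h.left i (by omega) (by omega)
      · rw [if_neg hil]
        have e : a + (f a - a) + 1 = f a + 1 := by omega
        rw [e]
        exact tsFromTree_toTree (m - (f a - a)) (f a + 1) f h.right i (by omega) (by omega)
termination_by m
decreasing_by all_goals omega

section Front

variable {n : ℕ}

/-- From a transfer system to its "max" function. -/
noncomputable def tsFun (n : ℕ) (R : ℕ → ℕ → Prop) : ℕ → ℕ :=
  fun a => if a ≤ n then sSup {b | R a b} else a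

/-- From a function to a relation. -/
def tsRel (n : ℕ) (f : ℕ → ℕ) : ℕ → ℕ → Prop :=
  fun a b => a ≤ n ∧ a ≤ b ∧ b ≤ f a

lemma tsFun_mem {R : ℕ → ℕ → Prop} (hR : IsTransferSystem n R) {a : ℕ} (ha : a ≤ n) :
    R a (tsFun n R a) := by
  have hbdd : BddAbove {b | R a b} := ⟨n, fun b hb => (hR.1 _ _ hb).2⟩
  have : sSup {b | R a b} ∈ {b | R a b} := Nat.sSup_mem ⟨a, hR.2.1 a ha⟩ hbdd
  simpa [tsFun, if_pos ha] using this

lemma le_tsFun {R : ℕ → ℕ → Prop} (hR : IsTransferSystem n R) {a b : ℕ} (hab : R a b) :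
    b ≤ tsFun n R a := by
  obtain ⟨h1, h2⟩ := hR.1 _ _ hab
  have ha : a ≤ n := le_trans h1 h2
  have hbdd : BddAbove {b | R a b} := ⟨n, fun b hb => (hR.1 _ _ hb).2⟩
  simpa [tsFun, if_pos ha] using le_csSup hbdd hab

lemma tsRel_tsFun_iff {R : ℕ → ℕ → Prop} (hR : IsTransferSystem n R) (a b : ℕ) :
    R a b ↔ tsRel n (tsFun n R) a b := by
  constructor
  · intro hab
    obtain ⟨h1, h2⟩ := hR.1 _ _ hab
    exact ⟨le_trans h1 h2, h1, le_tsFun hR hab⟩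
  · rintro ⟨ha, hab, hb⟩
    have hmax := tsFun_mem hR ha
    have := hR.2.2.2 a (tsFun n R a) b hmax hb
    rwa [min_eq_left hab] at this

lemma tsFun_valid {R : ℕ → ℕ → Prop} (hR : IsTransferSystem n R) :
    TSValid 0 (n+1) (tsFun n R) := by
  intro i _ hi2
  have hi : i ≤ n := by omega
  have hmem := tsFun_mem hR hi
  have hle : i ≤ tsFun n R i := le_tsFun hR (hR.2.1 i hi)
  have hub : tsFun n R i ≤ n := (hR.1 _ _ hmem).2
  refine ⟨hle, by omega, ?_⟩
  intro j hj1 hj2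
  have hj : j ≤ n := le_trans hj2 hub
  have hRij : R i j := (tsRel_tsFun_iff hR i j).2 ⟨hi, hj1, hj2⟩
  have hRj := tsFun_mem hR hj
  exact le_tsFun hR (hR.2.2.1 i j _ hRij hRj)

lemma tsFun_out {R : ℕ → ℕ → Prop} {i : ℕ} (hi : n + 1 ≤ i) : tsFun n R i = i := by
  have : ¬ i ≤ n := by omega
  simp [tsFun, this]

lemma tsRel_isTS {f : ℕ → ℕ} (hf : TSValid 0 (n+1) f) : IsTransferSystem n (tsRel n f) := by
  refine ⟨?_, ?_, ?_, ?_⟩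
  · rintro a b ⟨ha, hab, hb⟩
    have := hf a (Nat.zero_le _) (by omega)
    exact ⟨hab, by omega⟩
  · intro a ha
    have := hf a (Nat.zero_le _) (by omega)
    exact ⟨ha, le_rfl, this.1⟩
  · rintro a b c ⟨ha, hab, hbfa⟩ ⟨hb, hbc, hcfb⟩
    have := (hf a (Nat.zero_le _) (by omega)).2.2 b hab hbfa
    exact ⟨ha, le_trans hab hbc, le_trans hcfb this⟩
  · rintro k h m ⟨hk, hkh, hhfk⟩ hm
    rcases le_total k m with hkm | hmk
    · rw [min_eq_left hkm]
      exact ⟨hk, hkm, le_trans hm hhfk⟩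
    · rw [min_eq_right hmk]
      have hmn : m ≤ n := le_trans hmk hk
      exact ⟨hmn, le_rfl, (hf m (Nat.zero_le _) (by omega)).1⟩

/-- The equivalence between transfer systems and valid functions. -/
noncomputable def tsEquivFun (n : ℕ) : {R : ℕ → ℕ → Prop // IsTransferSystem n R} ≃
    {f : ℕ → ℕ // TSValid 0 (n+1) f ∧ ∀ i, n + 1 ≤ i → f i = i} where
  toFun := fun ⟨R, hR⟩ => ⟨tsFun n R, tsFun_valid hR, fun _ hi => tsFun_out hi⟩
  invFun := fun ⟨f, hf, _⟩ => ⟨tsRel n f, tsRel_isTS hf⟩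
  left_inv := by
    rintro ⟨R, hR⟩
    apply Subtype.ext
    funext a b
    exact propext (tsRel_tsFun_iff hR a b).symm
  right_inv := by
    rintro ⟨f, hf, hout⟩
    apply Subtype.ext
    funext a
    show tsFun n (tsRel n f) a = f a
    by_cases ha : a ≤ n
    · have hfa := hf a (Nat.zero_le _) (by omega)
      have hbdd : BddAbove {b | tsRel n f a b} := ⟨n, by
        rintro b ⟨_, hab, hb⟩
        have := hfa.2.1
        omega⟩
      have h1 : tsFun n (tsRel n f) a = sSup {b | tsRel n f a b} := by
        simp [tsFun, if_pos ha]
      rw [h1]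
      apply le_antisymm
      · exact csSup_le ⟨a, ha, le_rfl, hfa.1⟩ (by rintro b ⟨_, _, hb⟩; exact hb)
      · exact le_csSup hbdd ⟨ha, hfa.1, le_rfl⟩
    · rw [tsFun_out (by omega)]
      exact (hout a (by omega)).symm

/-- The equivalence between valid functions and binary trees with `n+1` nodes. -/
noncomputable def funEquivTree (n : ℕ) :
    {f : ℕ → ℕ // TSValid 0 (n+1) f ∧ ∀ i, n + 1 ≤ i → f i = i} ≃
    {t : BinaryTree Unit // t.numNodes = n + 1} where
  toFun := fun ⟨f, hf, _⟩ => ⟨tsToTree f (n+1) 0, numNodes_tsToTree _ _ _ hf⟩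
  invFun := fun ⟨t, ht⟩ => ⟨tsFromTree 0 t,
    by rw [← ht]; exact tsFromTree_valid t 0,
    fun i hi => tsFromTree_out t 0 i (Or.inr (by omega))⟩
  left_inv := by
    rintro ⟨f, hf, hout⟩
    apply Subtype.ext
    funext i
    show tsFromTree 0 (tsToTree f (n+1) 0) i = f i
    by_cases hi : i < n + 1
    · exact tsFromTree_toTree (n+1) 0 f hf i (Nat.zero_le _) (by omega)
    · rw [hout i (by omega)]
      exact tsFromTree_out _ 0 i (Or.inr (by
        rw [numNodes_tsToTree _ _ _ hf]; omega))
  right_inv := by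
    rintro ⟨t, ht⟩
    apply Subtype.ext
    show tsToTree (tsFromTree 0 t) (n+1) 0 = t
    rw [← ht]
    exact tsToTree_fromTree t 0

end Front

lemma catalan_eq_factorial_div (m : ℕ) :
    catalan m = Nat.factorial (2 * m) / (Nat.factorial (m + 1) * Nat.factorial m) := by
  have key : Nat.factorial (2 * m) = catalan m * (Nat.factorial (m + 1) * Nat.factorial m) := by
    have h1 : (2 * m).choose m * Nat.factorial m * Nat.factorial (2 * m - m)
        = Nat.factorial (2 * m) :=
      Nat.choose_mul_factorial_mul_factorial (by omega)
    have h2 : 2 * m - m = m := by omega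
    rw [h2] at h1
    have h3 : (m + 1) * catalan m = (2 * m).choose m := by
      rw [succ_mul_catalan_eq_centralBinom]; rfl
    rw [← h1, ← h3, Nat.factorial_succ]
    ring
  rw [key, Nat.mul_div_cancel _ (Nat.mul_pos (Nat.factorial_pos _) (Nat.factorial_pos _))]

theorem num_transfer_systems_eq_catalan (n : ℕ) :
    Nat.card {R : ℕ → ℕ → Prop // IsTransferSystem n R} =
      Nat.factorial (2 * (n + 1)) /
        (Nat.factorial (n + 2) * Nat.factorial (n + 1)) := by
  have e : {R : ℕ → ℕ → Prop // IsTransferSystem n R} ≃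
      {t : BinaryTree Unit // t ∈ treesOfNumNodesEq (n + 1)} :=
    ((tsEquivFun n).trans (funEquivTree n)).trans
      (Equiv.subtypeEquivRight (fun t => (mem_treesOfNumNodesEq).symm))
  rw [Nat.card_congr e, Nat.card_eq_fintype_card, Fintype.card_coe,
    treesOfNumNodesEq_card_eq_catalan, catalan_eq_factorial_div]
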